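/- (Discrete maximum principle.) Let X, Y, w : {0,…,n}×{0,…,m} → ℝ be mesh functions such that for all interior spatial indices k ∈ {1,…,n−1} and all time indices j < m: (D_t w)^j_k = X^j_k (D²w)^j_k + Y^j_k (D₀w)^j_k, and the coefficient conditions X^j_k + (Y^j_k/2)δu ≥ 0, 1 − 2X^j_k δt/(δu)² ≥ 0, and X^j_k − (Y^j_k/2)δu ≥ 0 hold. Then for every j < m, max_{0≤k≤n} |w^{j+1}_k| ≤ max{ |w^{j+1}_0|, max_{0≤k≤n} |w^j_k|, |w^{j+1}_n| }. -/
import Mathlib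


noncomputable section

open Finset

/-- The forward difference operator `(D₊v)_k = (v_{k+1} - v_k)/δu`. -/
def dplus (δu : ℝ) (v : ℕ → ℝ) (k : ℕ) : ℝ := (v (k + 1) - v k) / δu

/-- The centred difference operator `(D₀v)_k = (v_{k+1} - v_{k-1})/(2δu)`
(used only at interior indices `k ≥ 1`). -/
def d0 (δu : ℝ) (v : ℕ → ℝ) (k : ℕ) : ℝ := (v (k + 1) - v (k - 1)) / (2 * δu)

/-- The second difference operator
`(D²v)_k = (v_{k+1} - 2v_k + v_{k-1})/δu²`. -/
def d2 (δu : ℝ) (v : ℕ → ℝ) (k : ℕ) : ℝ :=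
  (v (k + 1) - 2 * v k + v (k - 1)) / δu ^ 2

/-- The forward time difference operator `(D_t w)^j_k = (w^{j+1}_k - w^j_k)/δt`
for a mesh function `w` (time index first). -/
def dtime (δt : ℝ) (w : ℕ → ℕ → ℝ) (j k : ℕ) : ℝ := (w (j + 1) k - w j k) / δt

/-- The discrete length functional
`L[v] = δu Σ_{i<n} √(1 + ((D₊v)_i)²)`. -/
def dlen (δu : ℝ) (n : ℕ) (v : ℕ → ℝ) : ℝ :=
  δu * ∑ i ∈ Finset.range n, Real.sqrt (1 + dplus δu v i ^ 2)

/-- The discrete sup-norm (maximum of absolute values) over a finite set of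
spatial indices. -/
def supOn (s : Finset ℕ) (v : ℕ → ℝ) : ℝ := s.fold max 0 (fun k => |v k|)


lemma supOn_le_iff (s : Finset ℕ) (v : ℕ → ℝ) (M : ℝ) :
    supOn s v ≤ M ↔ 0 ≤ M ∧ ∀ k ∈ s, |v k| ≤ M := by
  unfold supOn
  exact Finset.fold_max_le M

lemma le_supOn (s : Finset ℕ) (v : ℕ → ℝ) (k : ℕ) (hk : k ∈ s) :
    |v k| ≤ supOn s v := by
  unfold supOn
  exact (Finset.le_fold_max |v k|).2 (Or.inr ⟨k, hk, le_rfl⟩)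

/-- Lemma 6.3, discrete maximum principle: if a mesh function
`w` satisfies `(D_t w)^j_k = X^j_k (D²w)^j_k + Y^j_k (D₀w)^j_k` at all interior
spatial indices and the coefficient positivity conditions hold, then
`max_k |w^{j+1}_k| ≤ max{|w^{j+1}_0|, max_k |w^j_k|, |w^{j+1}_n|}`. -/
theorem discrete_maximum_principle (δu δt : ℝ) (hδu : 0 < δu) (hδt : 0 < δt)
    (n m : ℕ) (X Y w : ℕ → ℕ → ℝ)
    (heq : ∀ j, j < m → ∀ k, 0 < k → k < n →
      dtime δt w j k = X j k * d2 δu (w j) k + Y j k * d0 δu (w j) k)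
    (hcoef : ∀ j, j < m → ∀ k, 0 < k → k < n →
      0 ≤ X j k + Y j k / 2 * δu ∧
      0 ≤ 1 - 2 * X j k * δt / δu ^ 2 ∧
      0 ≤ X j k - Y j k / 2 * δu) :
    ∀ j, j < m →
      supOn (Finset.range (n + 1)) (w (j + 1)) ≤
        max |w (j + 1) 0|
          (max (supOn (Finset.range (n + 1)) (w j)) |w (j + 1) n|) := by
  intro j hj
  set S := supOn (Finset.range (n + 1)) (w j) with hSdef
  set M := max |w (j + 1) 0| (max S |w (j + 1) n|) with hMdef
  have hM0 : (0:ℝ) ≤ M := le_trans (abs_nonneg _) (le_max_left _ _)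
  rw [supOn_le_iff]
  refine ⟨hM0, fun k hk => ?_⟩
  rw [Finset.mem_range] at hk
  rcases Nat.eq_zero_or_pos k with hk0 | hkpos
  · subst hk0; exact le_max_left _ _
  rcases eq_or_lt_of_le (Nat.lt_succ_iff.mp hk) with hkn | hkn
  · subst hkn; exact le_trans (le_max_right _ _) (le_max_right _ _)
  -- interior case
  have heqk := heq j hj k hkpos hkn
  obtain ⟨ha', hb', hc'⟩ := hcoef j hj k hkpos hkn
  set a : ℝ := δt / δu ^ 2 * (X j k + Y j k / 2 * δu) with hadef
  set b : ℝ := 1 - 2 * X j k * δt / δu ^ 2 with hbdef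
  set c : ℝ := δt / δu ^ 2 * (X j k - Y j k / 2 * δu) with hcdef
  have hδu2 : (0:ℝ) < δu ^ 2 := by positivity
  have ha : 0 ≤ a := mul_nonneg (by positivity) ha'
  have hc : 0 ≤ c := mul_nonneg (by positivity) hc'
  have habc : a + b + c = 1 := by
    rw [hadef, hbdef, hcdef]; field_simp; ring
  have hcomb : w (j + 1) k = a * w j (k + 1) + b * w j k + c * w j (k - 1) := by
    have hne : δu ≠ 0 := ne_of_gt hδu
    have htne : δt ≠ 0 := ne_of_gt hδt
    rw [dtime, div_eq_iff htne] at heqk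
    rw [hadef, hbdef, hcdef]
    unfold d2 d0 at heqk
    have h2' : δu * δu⁻¹ = 1 := mul_inv_cancel₀ hne
    linear_combination heqk - ((w j (k+1) - w j (k-1)) * Y j k * δt / 2 * δu⁻¹) * h2' 
  have h1 : |w j (k + 1)| ≤ S := le_supOn _ _ _ (Finset.mem_range.2 (by omega))
  have h2 : |w j k| ≤ S := le_supOn _ _ _ (Finset.mem_range.2 (by omega))
  have h3 : |w j (k - 1)| ≤ S := le_supOn _ _ _ (Finset.mem_range.2 (by omega))
  have hSM : S ≤ M := le_trans (le_max_left _ _) (le_max_right _ _)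
  have e1 := abs_le.mp h1
  have e2 := abs_le.mp h2
  have e3 := abs_le.mp h3
  rw [abs_le, hcomb]
  constructor
  · nlinarith [mul_le_mul_of_nonneg_left e1.1 ha, mul_le_mul_of_nonneg_left e2.1 hb',
      mul_le_mul_of_nonneg_left e3.1 hc]
  · nlinarith [mul_le_mul_of_nonneg_left e1.2 ha, mul_le_mul_of_nonneg_left e2.2 hb',
      mul_le_mul_of_nonneg_left e3.2 hc]
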